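/- Let q ≥ 2, let P be a positive integer, let χ range over all Dirichlet characters mod P, and let (v_n) be a complex sequence. Then Σ*_{χ mod P, χ primitive} |Σ_{n ≤ x} v_n χ(n)|² ≤ (φ(P)/P) · Σ_{a mod P, gcd(a,P)=1} |Σ_{n ≤ x} v_n e(an/P)|², where the left sum is over primitive characters modulo P. -/

import Mathlib

open Finset

/-- `e(α) = exp(2πiα)`. -/
noncomputable def e (α : ℝ) : ℂ := Complex.exp (2 * Real.pi * Complex.I * α)

section AuxLS
open DirichletCharacter Complex

lemma LS.factorsThrough_inv {P d : ℕ} (χ : DirichletCharacter ℂ P) (h : χ.FactorsThrough d) :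
    (χ⁻¹).FactorsThrough d := by
  obtain ⟨hd, χ₀, hχ₀⟩ := h
  exact ⟨hd, χ₀⁻¹, by rw [map_inv, ← hχ₀]⟩

lemma LS.isPrimitive_inv {P : ℕ} [NeZero P] {χ : DirichletCharacter ℂ P} (h : χ.IsPrimitive) :
    (χ⁻¹).IsPrimitive := by
  have h1 : χ.FactorsThrough (χ⁻¹).conductor := by
    have := LS.factorsThrough_inv χ⁻¹ (χ⁻¹).factorsThrough_conductor
    rwa [inv_inv] at this
  refine Nat.le_antisymm (Nat.le_of_dvd (Nat.pos_of_ne_zero (NeZero.ne P))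
    ((χ⁻¹).conductor_dvd_level)) ?_
  calc P = χ.conductor := h.symm
  _ ≤ (χ⁻¹).conductor := Nat.sInf_le h1

lemma LS.charsum {P : ℕ} [NeZero P] (a b : ZMod P) :
    ∑ χ : DirichletCharacter ℂ P, χ a * (starRingEnd ℂ) (χ b) =
      if a = b then (if IsUnit b then (P.totient : ℂ) else 0) else 0 := by
  by_cases hb : IsUnit b
  · have key : ∀ χ : DirichletCharacter ℂ P, χ a * (starRingEnd ℂ) (χ b)
        = χ (a * ↑hb.unit⁻¹) := by
      intro χ
      rw [map_mul]
      congr 1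
      have hinv : Ring.inverse b = ((hb.unit⁻¹ : (ZMod P)ˣ) : ZMod P) := by
        conv_lhs => rw [← hb.unit_spec]
        exact Ring.inverse_unit hb.unit
      rw [show (starRingEnd ℂ) (χ b) = star (χ b) from rfl, MulChar.star_apply',
        MulChar.inv_apply, hinv]
    simp_rw [key]
    rw [DirichletCharacter.sum_characters_eq]
    simp only [hb, if_true, Units.mul_inv_eq_one, hb.unit_spec]
  · simp only [hb, if_false, ite_self]
    simp [MulChar.map_nonunit _ hb]

lemma LS.conj_stdAddChar {P : ℕ} [NeZero P] (x : ZMod P) :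
    (starRingEnd ℂ) (ZMod.stdAddChar x) = ZMod.stdAddChar (-x) := by
  rw [AddChar.map_neg_eq_inv]
  refine (Complex.inv_eq_conj ?_).symm
  rw [ZMod.stdAddChar_apply]
  exact Circle.norm_coe _

lemma LS.gaussSum_apply {P : ℕ} [NeZero P] {χ : DirichletCharacter ℂ P} (hχ : χ.IsPrimitive)
    (n : ZMod P) :
    ∑ a : ZMod P, χ a * ZMod.stdAddChar (n * a) = χ⁻¹ n * gaussSum χ ZMod.stdAddChar := by
  rw [← gaussSum_mulShift_of_isPrimitive ZMod.stdAddChar hχ n]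
  simp [gaussSum, AddChar.mulShift_apply]

lemma LS.gauss_abs_sq {P : ℕ} [NeZero P] {χ : DirichletCharacter ℂ P} (hχ : χ.IsPrimitive) :
    ‖gaussSum χ ZMod.stdAddChar‖ ^ 2 = P := by
  classical
  set ψ : AddChar (ZMod P) ℂ := ZMod.stdAddChar with hψdef
  have hconj : ∀ y : ZMod P, (starRingEnd ℂ) (ψ y) = ψ (-y) := fun y => LS.conj_stdAddChar y
  have hψ : ψ.IsPrimitive := ZMod.isPrimitive_stdAddChar P
  set U : ℂ := ∑ a : ZMod P, χ a * (starRingEnd ℂ) (χ a) with hU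
  set τ : ℂ := gaussSum χ ψ with hτ
  have key : ∀ n : ZMod P, ∑ a : ZMod P, χ a * ψ (n * a) = χ⁻¹ n * τ :=
    fun n => LS.gaussSum_apply hχ n
  have way2 : ∑ n : ZMod P, (∑ a : ZMod P, χ a * ψ (n * a)) *
      (starRingEnd ℂ) (∑ a : ZMod P, χ a * ψ (n * a)) = (P : ℂ) * U := by
    have expand : ∀ n : ZMod P, (∑ a : ZMod P, χ a * ψ (n * a)) *
        (starRingEnd ℂ) (∑ a : ZMod P, χ a * ψ (n * a))
        = ∑ a : ZMod P, ∑ b : ZMod P,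
            (χ a * (starRingEnd ℂ) (χ b)) * ψ (n * (a - b)) := by
      intro n
      rw [map_sum, Finset.sum_mul_sum]
      refine Finset.sum_congr rfl fun a _ => Finset.sum_congr rfl fun b _ => ?_
      rw [map_mul (starRingEnd ℂ), hconj (n * b)]
      have hmul : ψ (n * a) * ψ (-(n * b)) = ψ (n * (a - b)) := by
        rw [← AddChar.map_add_eq_mul]; congr 1; ring
      calc χ a * ψ (n * a) * ((starRingEnd ℂ) (χ b) * ψ (-(n * b)))
          = (χ a * (starRingEnd ℂ) (χ b)) * (ψ (n * a) * ψ (-(n * b))) := by ring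
        _ = (χ a * (starRingEnd ℂ) (χ b)) * ψ (n * (a - b)) := by rw [hmul]
    simp_rw [expand]
    rw [Finset.sum_comm]
    have swap2 : ∀ a : ZMod P, ∑ n : ZMod P, ∑ b : ZMod P,
        (χ a * (starRingEnd ℂ) (χ b)) * ψ (n * (a - b))
        = ∑ b : ZMod P, ∑ n : ZMod P,
            (χ a * (starRingEnd ℂ) (χ b)) * ψ (n * (a - b)) := fun a => Finset.sum_comm
    have inner : ∀ a : ZMod P, ∑ b : ZMod P, ∑ n : ZMod P,
        (χ a * (starRingEnd ℂ) (χ b)) * ψ (n * (a - b))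
        = (χ a * (starRingEnd ℂ) (χ a)) * P := by
      intro a
      have hb : ∀ b : ZMod P, ∑ n : ZMod P,
          (χ a * (starRingEnd ℂ) (χ b)) * ψ (n * (a - b))
          = if a = b then (χ a * (starRingEnd ℂ) (χ b)) * (P : ℂ) else 0 := by
        intro b
        rw [← Finset.mul_sum, AddChar.sum_mulShift _ hψ]
        simp only [sub_eq_zero, ZMod.card]
        split_ifs <;> simp
      simp_rw [hb]
      rw [Finset.sum_ite_eq Finset.univ a
        (fun b => (χ a * (starRingEnd ℂ) (χ b)) * (P : ℂ))]
      simp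
    calc ∑ a : ZMod P, ∑ n : ZMod P, ∑ b : ZMod P,
          (χ a * (starRingEnd ℂ) (χ b)) * ψ (n * (a - b))
        = ∑ a : ZMod P, (χ a * (starRingEnd ℂ) (χ a)) * P := by
          exact Finset.sum_congr rfl fun a _ => (swap2 a).trans (inner a)
      _ = (P : ℂ) * U := by rw [hU, Finset.mul_sum]; exact Finset.sum_congr rfl fun a _ => by ring
  have way1 : ∑ n : ZMod P, (∑ a : ZMod P, χ a * ψ (n * a)) *
      (starRingEnd ℂ) (∑ a : ZMod P, χ a * ψ (n * a)) = (τ * (starRingEnd ℂ) τ) * U := by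
    simp_rw [key]
    have hstar : ∀ n : ZMod P, (χ⁻¹ n * τ) * (starRingEnd ℂ) (χ⁻¹ n * τ)
        = (τ * (starRingEnd ℂ) τ) * (χ n * (starRingEnd ℂ) (χ n)) := by
      intro n
      have h1 : χ⁻¹ n = (starRingEnd ℂ) (χ n) := (MulChar.star_apply' χ n).symm
      rw [h1, map_mul, Complex.conj_conj]
      ring
    simp_rw [hstar]
    rw [← Finset.mul_sum, hU]
  have hUne : U ≠ 0 := by
    have hUreal : U = ((∑ a : ZMod P, Complex.normSq (χ a) : ℝ) : ℂ) := by
      rw [hU]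
      push_cast
      exact Finset.sum_congr rfl fun a _ => (Complex.mul_conj _)
    rw [hUreal, Complex.ofReal_ne_zero]
    have h1 : (1 : ℝ) ≤ ∑ a : ZMod P, Complex.normSq (χ a) := by
      have := Finset.single_le_sum (f := fun a : ZMod P => Complex.normSq (χ a))
        (fun a _ => Complex.normSq_nonneg _) (Finset.mem_univ (1 : ZMod P))
      simpa using this
    linarith
  have hmain : τ * (starRingEnd ℂ) τ = (P : ℂ) := mul_right_cancel₀ hUne (way1.symm.trans way2)
  have : ((Complex.normSq τ : ℝ) : ℂ) = ((P : ℝ) : ℂ) := by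
    rw [← Complex.mul_conj, hmain]; push_cast; ring
  rw [Complex.sq_norm]
  exact_mod_cast this

end AuxLS

open scoped Classical in
/-- Reduction of the multiplicative large sieve to the additive one for a single modulus `P`:
the sum over primitive characters mod `P` of `|∑_{n ≤ x} v_n χ(n)|²` is at most
`(φ(P)/P) ∑_{a mod P, (a,P)=1} |∑_{n ≤ x} v_n e(an/P)|²`. -/
theorem mult_large_sieve_single_modulus (P : ℕ) (hP : 2 ≤ P) (x : ℕ) (v : ℕ → ℂ) :
    ∑ χ ∈ Finset.univ.filter (fun χ : DirichletCharacter ℂ P => χ.IsPrimitive),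
        ‖∑ n ∈ Finset.Icc 1 x, v n * χ (n : ZMod P)‖ ^ 2
      ≤ ((Nat.totient P : ℝ) / P) *
        ∑ a ∈ (Finset.range P).filter (fun a => Nat.Coprime a P),
          ‖∑ n ∈ Finset.Icc 1 x, v n * e ((a : ℝ) * n / P)‖ ^ 2 := by
  haveI : NeZero P := ⟨by omega⟩
  have hPpos : (0 : ℝ) < P := by positivity
  set ψ : AddChar (ZMod P) ℂ := ZMod.stdAddChar with hψdef
  set T : ZMod P → ℂ := fun a => ∑ n ∈ Finset.Icc 1 x, v n * ψ ((n : ZMod P) * a) with hT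
  -- Identify the additive sums with `T`
  have hTe : ∀ a : ℕ, T ((a : ZMod P)) = ∑ n ∈ Finset.Icc 1 x, v n * e ((a : ℝ) * n / P) := by
    intro a
    refine Finset.sum_congr rfl fun n _ => ?_
    congr 1
    have harg : ((n : ZMod P) * (a : ZMod P)) = (((n * a : ℕ) : ℤ) : ZMod P) := by
      push_cast; ring
    rw [hψdef, harg, ZMod.stdAddChar_coe]
    show _ = Complex.exp _
    congr 1
    push_cast
    ring
  have hRHS : ∑ a ∈ (Finset.range P).filter (fun a => Nat.Coprime a P),
      ‖∑ n ∈ Finset.Icc 1 x, v n * e ((a : ℝ) * n / P)‖ ^ 2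
      = ∑ a ∈ Finset.univ.filter (fun a : ZMod P => IsUnit a), ‖T a‖ ^ 2 := by
    refine Finset.sum_nbij' (i := fun a => ((a : ZMod P))) (j := fun b => b.val) ?_ ?_ ?_ ?_ ?_
    · intro a ha
      rw [Finset.mem_filter] at ha ⊢
      exact ⟨Finset.mem_univ _, (ZMod.isUnit_iff_coprime a P).mpr ha.2⟩
    · intro b hb
      rw [Finset.mem_filter] at hb ⊢
      refine ⟨Finset.mem_range.mpr (ZMod.val_lt b), ?_⟩
      rw [← ZMod.isUnit_iff_coprime]
      rw [ZMod.natCast_rightInverse b]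
      exact hb.2
    · intro a ha
      rw [Finset.mem_filter, Finset.mem_range] at ha
      exact ZMod.val_cast_of_lt ha.1
    · intro b _
      exact ZMod.natCast_rightInverse b
    · intro a _
      rw [hTe a]
  -- Key Gauss sum identity
  have key : ∀ χ : DirichletCharacter ℂ P, χ.IsPrimitive →
      ∑ a : ZMod P, χ a * T a
        = gaussSum χ ψ * ∑ n ∈ Finset.Icc 1 x, v n * χ⁻¹ ((n : ZMod P)) := by
    intro χ hχ
    calc ∑ a : ZMod P, χ a * T a
        = ∑ a : ZMod P, ∑ n ∈ Finset.Icc 1 x, v n * (χ a * ψ ((n : ZMod P) * a)) := by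
          refine Finset.sum_congr rfl fun a _ => ?_
          rw [hT]
          rw [Finset.mul_sum]
          exact Finset.sum_congr rfl fun n _ => by ring
      _ = ∑ n ∈ Finset.Icc 1 x, ∑ a : ZMod P, v n * (χ a * ψ ((n : ZMod P) * a)) :=
          Finset.sum_comm
      _ = ∑ n ∈ Finset.Icc 1 x, v n * (χ⁻¹ ((n : ZMod P)) * gaussSum χ ψ) := by
          refine Finset.sum_congr rfl fun n _ => ?_
          rw [← Finset.mul_sum, LS.gaussSum_apply hχ]
      _ = gaussSum χ ψ * ∑ n ∈ Finset.Icc 1 x, v n * χ⁻¹ ((n : ZMod P)) := by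
          rw [Finset.mul_sum]
          exact Finset.sum_congr rfl fun n _ => by ring
  -- step 3
  have step3 : ∀ χ : DirichletCharacter ℂ P, χ.IsPrimitive →
      ‖∑ n ∈ Finset.Icc 1 x, v n * χ⁻¹ ((n : ZMod P))‖ ^ 2
        = ‖∑ a : ZMod P, χ a * T a‖ ^ 2 / P := by
    intro χ hχ
    rw [key χ hχ, norm_mul, mul_pow, LS.gauss_abs_sq hχ]
    field_simp
  -- step 5 : reindex primitive characters by inversion
  have step5 : ∑ χ ∈ Finset.univ.filter (fun χ : DirichletCharacter ℂ P => χ.IsPrimitive),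
      ‖∑ n ∈ Finset.Icc 1 x, v n * χ ((n : ZMod P))‖ ^ 2
      = ∑ χ ∈ Finset.univ.filter (fun χ : DirichletCharacter ℂ P => χ.IsPrimitive),
          ‖∑ n ∈ Finset.Icc 1 x, v n * χ⁻¹ ((n : ZMod P))‖ ^ 2 := by
    refine Finset.sum_nbij' (i := fun χ => χ⁻¹) (j := fun χ => χ⁻¹) ?_ ?_ ?_ ?_ ?_
    · intro χ hχ
      rw [Finset.mem_filter] at hχ ⊢
      exact ⟨Finset.mem_univ _, LS.isPrimitive_inv hχ.2⟩
    · intro χ hχ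
      rw [Finset.mem_filter] at hχ ⊢
      exact ⟨Finset.mem_univ _, LS.isPrimitive_inv hχ.2⟩
    · intro χ _; exact inv_inv χ
    · intro χ _; exact inv_inv χ
    · intro χ _
      rw [inv_inv]
  -- orthogonality
  have orth : ∑ χ : DirichletCharacter ℂ P, ‖∑ a : ZMod P, χ a * T a‖ ^ 2
      = (P.totient : ℝ) * ∑ a ∈ Finset.univ.filter (fun a : ZMod P => IsUnit a),
          ‖T a‖ ^ 2 := by
    have lift : ∀ z : ℂ, ((‖z‖ : ℝ) : ℂ) ^ 2 = z * (starRingEnd ℂ) z := by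
      intro z
      rw [← Complex.ofReal_pow, Complex.sq_norm, Complex.mul_conj]
    have complexeq : ∑ χ : DirichletCharacter ℂ P,
        (∑ a : ZMod P, χ a * T a) * (starRingEnd ℂ) (∑ a : ZMod P, χ a * T a)
        = (P.totient : ℂ) * ∑ a ∈ Finset.univ.filter (fun a : ZMod P => IsUnit a),
            T a * (starRingEnd ℂ) (T a) := by
      have expand : ∀ χ : DirichletCharacter ℂ P,
          (∑ a : ZMod P, χ a * T a) * (starRingEnd ℂ) (∑ a : ZMod P, χ a * T a)
          = ∑ a : ZMod P, ∑ b : ZMod P,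
              (T a * (starRingEnd ℂ) (T b)) * (χ a * (starRingEnd ℂ) (χ b)) := by
        intro χ
        rw [map_sum, Finset.sum_mul_sum]
        refine Finset.sum_congr rfl fun a _ => Finset.sum_congr rfl fun b _ => ?_
        rw [map_mul]
        ring
      simp_rw [expand]
      rw [Finset.sum_comm]
      have swap2 : ∀ a : ZMod P, ∑ χ : DirichletCharacter ℂ P, ∑ b : ZMod P,
          (T a * (starRingEnd ℂ) (T b)) * (χ a * (starRingEnd ℂ) (χ b))
          = ∑ b : ZMod P, ∑ χ : DirichletCharacter ℂ P,
              (T a * (starRingEnd ℂ) (T b)) * (χ a * (starRingEnd ℂ) (χ b)) :=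
        fun a => Finset.sum_comm
      have inner : ∀ a : ZMod P, ∑ b : ZMod P, ∑ χ : DirichletCharacter ℂ P,
          (T a * (starRingEnd ℂ) (T b)) * (χ a * (starRingEnd ℂ) (χ b))
          = if IsUnit a then (P.totient : ℂ) * (T a * (starRingEnd ℂ) (T a)) else 0 := by
        intro a
        have hb : ∀ b : ZMod P, ∑ χ : DirichletCharacter ℂ P,
            (T a * (starRingEnd ℂ) (T b)) * (χ a * (starRingEnd ℂ) (χ b))
            = if a = b then (T a * (starRingEnd ℂ) (T b)) *
                (if IsUnit b then (P.totient : ℂ) else 0) else 0 := by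
          intro b
          rw [← Finset.mul_sum, LS.charsum a b]
          split_ifs <;> simp
        simp_rw [hb]
        rw [Finset.sum_ite_eq Finset.univ a (fun b => (T a * (starRingEnd ℂ) (T b)) *
          (if IsUnit b then (P.totient : ℂ) else 0))]
        simp only [Finset.mem_univ, if_true]
        split_ifs <;> ring_nf
      calc ∑ a : ZMod P, ∑ χ : DirichletCharacter ℂ P, ∑ b : ZMod P,
            (T a * (starRingEnd ℂ) (T b)) * (χ a * (starRingEnd ℂ) (χ b))
          = ∑ a : ZMod P,
              (if IsUnit a then (P.totient : ℂ) * (T a * (starRingEnd ℂ) (T a)) else 0) :=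
            Finset.sum_congr rfl fun a _ => (swap2 a).trans (inner a)
        _ = (P.totient : ℂ) * ∑ a ∈ Finset.univ.filter (fun a : ZMod P => IsUnit a),
              T a * (starRingEnd ℂ) (T a) := by
            rw [Finset.mul_sum, Finset.sum_filter]
    have : ((∑ χ : DirichletCharacter ℂ P,
        ‖∑ a : ZMod P, χ a * T a‖ ^ 2 : ℝ) : ℂ)
        = (((P.totient : ℝ) * ∑ a ∈ Finset.univ.filter (fun a : ZMod P => IsUnit a),
            ‖T a‖ ^ 2 : ℝ) : ℂ) := by
      push_cast
      simp_rw [lift]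
      rw [complexeq]
    exact_mod_cast this
  -- assemble
  rw [step5]
  calc ∑ χ ∈ Finset.univ.filter (fun χ : DirichletCharacter ℂ P => χ.IsPrimitive),
        ‖∑ n ∈ Finset.Icc 1 x, v n * χ⁻¹ ((n : ZMod P))‖ ^ 2
      = ∑ χ ∈ Finset.univ.filter (fun χ : DirichletCharacter ℂ P => χ.IsPrimitive),
          ‖∑ a : ZMod P, χ a * T a‖ ^ 2 / P := by
        refine Finset.sum_congr rfl fun χ hχ => ?_
        exact step3 χ (Finset.mem_filter.mp hχ).2
    _ ≤ ∑ χ : DirichletCharacter ℂ P, ‖∑ a : ZMod P, χ a * T a‖ ^ 2 / P := by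
        refine Finset.sum_le_sum_of_subset_of_nonneg (Finset.filter_subset _ _) ?_
        intro χ _ _
        positivity
    _ = (∑ χ : DirichletCharacter ℂ P, ‖∑ a : ZMod P, χ a * T a‖ ^ 2) / P := by
        rw [Finset.sum_div]
    _ = ((P.totient : ℝ) / P) * ∑ a ∈ Finset.univ.filter (fun a : ZMod P => IsUnit a),
          ‖T a‖ ^ 2 := by
        rw [orth]; ring
    _ = ((P.totient : ℝ) / P) * ∑ a ∈ (Finset.range P).filter (fun a => Nat.Coprime a P),
          ‖∑ n ∈ Finset.Icc 1 x, v n * e ((a : ℝ) * n / P)‖ ^ 2 := by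
        rw [hRHS]
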